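/- For all real x, x * tanh(x) ≥ x^2 - x^4/3. -/

import Mathlib

open Real

lemma hasDerivAt_tanh' (x : ℝ) :
    HasDerivAt Real.tanh (1 - Real.tanh x ^ 2) x := by
  have hc : Real.cosh x ≠ 0 := (Real.cosh_pos x).ne'
  have h := (Real.hasDerivAt_sinh x).div (Real.hasDerivAt_cosh x) hc
  have heq : (Real.cosh x * Real.cosh x - Real.sinh x * Real.sinh x) / Real.cosh x ^ 2
      = 1 - Real.tanh x ^ 2 := by
    rw [Real.tanh_eq_sinh_div_cosh]
    have h1 := Real.cosh_sq_sub_sinh_sq x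
    field_simp
  have hfun : (fun y => Real.sinh y / Real.cosh y) = Real.tanh := by
    funext y; rw [Real.tanh_eq_sinh_div_cosh]
  have hfun' : Real.sinh / Real.cosh = Real.tanh := hfun
  rw [heq, hfun'] at h
  exact h

lemma abs_tanh_le (x : ℝ) : Real.tanh x ^ 2 ≤ x ^ 2 := by
  have hmono : Monotone (fun y : ℝ => y - Real.tanh y) := by
    apply monotone_of_deriv_nonneg
    · exact (differentiable_id.sub fun y => (hasDerivAt_tanh' y).differentiableAt)
    · intro y
      have : HasDerivAt (fun y : ℝ => y - Real.tanh y) (1 - (1 - Real.tanh y ^ 2)) y :=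
        (hasDerivAt_id y).sub (hasDerivAt_tanh' y)
      rw [this.deriv]
      nlinarith [sq_nonneg (Real.tanh y)]
  have hsign : ∀ y : ℝ, 0 ≤ y → 0 ≤ Real.tanh y := by
    intro y hy
    rw [Real.tanh_eq_sinh_div_cosh]
    exact div_nonneg (Real.sinh_nonneg_iff.2 hy) (Real.cosh_pos y).le
  rcases le_or_gt 0 x with hx | hx
  · have h1 : (0:ℝ) - Real.tanh 0 ≤ x - Real.tanh x := hmono hx
    rw [Real.tanh_zero] at h1
    have h2 := hsign x hx
    nlinarith
  · have h1 : x - Real.tanh x ≤ (0:ℝ) - Real.tanh 0 := hmono hx.le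
    rw [Real.tanh_zero] at h1
    have h2 : Real.tanh x ≤ 0 := by
      rw [Real.tanh_eq_sinh_div_cosh]
      exact div_nonpos_of_nonpos_of_nonneg
        (by simpa using Real.sinh_le_sinh.2 hx.le) (Real.cosh_pos x).le
    nlinarith

lemma tanh_taylor_mono : Monotone (fun y : ℝ => Real.tanh y - y + y ^ 3 / 3) := by
  apply monotone_of_deriv_nonneg
  · have hd : Differentiable ℝ Real.tanh := fun y => (hasDerivAt_tanh' y).differentiableAt
    exact (hd.sub differentiable_id).add ((differentiable_pow 3).div_const 3)
  · intro y
    have h : HasDerivAt (fun y : ℝ => Real.tanh y - y + y ^ 3 / 3)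
        ((1 - Real.tanh y ^ 2) - 1 + (3 * y ^ 2) / 3) y := by
      exact ((hasDerivAt_tanh' y).sub (hasDerivAt_id y)).add
        (((hasDerivAt_pow 3 y).div_const 3).congr_deriv (by ring))
    rw [h.deriv]
    have := abs_tanh_le y
    nlinarith

theorem mul_tanh_taylor_lower (x : ℝ) :
    x ^ 2 - x ^ 4 / 3 ≤ x * Real.tanh x := by
  rcases le_or_gt 0 x with hx | hx
  · have h := tanh_taylor_mono hx
    simp only [Real.tanh_zero] at h
    nlinarith
  · have h := tanh_taylor_mono hx.le
    simp only [Real.tanh_zero] at h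
    nlinarith
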